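/- Runtime bound of LocGD: Let Q = I - ((1-α)/(1+α)) W, b = (2α/(1+α)) D^{-1/2} e_s, x^{(0)} = 0, r^{(0)} = b, and for subsets S_0, …, S_{T-1} ⊆ V define x^{(t+1)} = x^{(t)} + r^{(t)}_{S_t} and r^{(t+1)} = r^{(t)} - Q r^{(t)}_{S_t}. If ε > 0 and every active set consists of active vertices, i.e. for all t < T and all u ∈ S_t one has √(d_u) · r^{(t)}_u ≥ (2αε/(1+α)) d_u, then Σ_{t=0}^{T-1} vol(S_t) ≤ (1+α)/(2αε), where vol(S) = Σ_{u∈S} d_u. -/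

import Mathlib

/-- Runtime bound of LocGD. -/
theorem locGD_runtime_bound
    {V : Type*} [Fintype V] [DecidableEq V] [Nonempty V]
    (A : Matrix V V ℝ) (hsym : A.IsSymm)
    (h01 : ∀ u v, A u v = 0 ∨ A u v = 1)
    (hdiag : ∀ u, A u u = 0)
    (d : V → ℝ) (hd : ∀ u, d u = ∑ v, A u v)
    (hdpos : ∀ u, 0 < d u)
    (α : ℝ) (hα0 : 0 < α) (hα1 : α < 1)
    (W : Matrix V V ℝ)
    (hW : ∀ v w, W v w = A v w / (Real.sqrt (d v) * Real.sqrt (d w)))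
    (Q : Matrix V V ℝ) (hQ : Q = 1 - ((1 - α) / (1 + α)) • W)
    (s : V) (ε : ℝ) (hε : 0 < ε)
    (b : V → ℝ)
    (hb : b = fun v => (2 * α / (1 + α)) * ((Pi.single s 1 : V → ℝ) v / Real.sqrt (d v)))
    (T : ℕ) (S : ℕ → Finset V)
    (x r : ℕ → V → ℝ)
    (hx0 : x 0 = 0) (hr0 : r 0 = b)
    (hxupd : ∀ t, x (t + 1) = x t + fun v => if v ∈ S t then r t v else 0)
    (hrupd : ∀ t, r (t + 1) = r t - Q.mulVec fun v => if v ∈ S t then r t v else 0)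
    (hactive : ∀ t < T, ∀ u ∈ S t, (2 * α * ε / (1 + α)) * d u ≤ Real.sqrt (d u) * r t u) :
    (∑ t ∈ Finset.range T, ∑ u ∈ S t, d u) ≤ (1 + α) / (2 * α * ε) := by
  have h1α : (0:ℝ) < 1 + α := by linarith
  have hsd : ∀ u, 0 < Real.sqrt (d u) := fun u => Real.sqrt_pos.mpr (hdpos u)
  have hAnn : ∀ u v, 0 ≤ A u v := by
    intro u v; rcases h01 u v with h | h <;> simp [h]
  have hcol : ∀ w, ∑ u, A u w = d w := by
    intro w; rw [hd w]
    exact Finset.sum_congr rfl fun u _ => (hsym.apply u w).symm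
  -- summation identity for W
  have hWsum : ∀ z : V → ℝ,
      ∑ u, Real.sqrt (d u) * W.mulVec z u = ∑ u, Real.sqrt (d u) * z u := by
    intro z
    have h1 : ∀ u, Real.sqrt (d u) * W.mulVec z u
        = ∑ w, (A u w / Real.sqrt (d w)) * z w := by
      intro u
      simp only [Matrix.mulVec, dotProduct, hW, Finset.mul_sum]
      refine Finset.sum_congr rfl fun w _ => ?_
      field_simp
      rw [mul_assoc, mul_div_mul_left _ _ (ne_of_gt (hsd u))]
    rw [Finset.sum_congr rfl fun u _ => h1 u, Finset.sum_comm]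
    refine Finset.sum_congr rfl fun w _ => ?_
    rw [← Finset.sum_mul, ← Finset.sum_div, hcol w, Real.div_sqrt]
  -- summation identity for Q
  have hQsum : ∀ z : V → ℝ,
      ∑ u, Real.sqrt (d u) * Q.mulVec z u
        = (2 * α / (1 + α)) * ∑ u, Real.sqrt (d u) * z u := by
    intro z
    have : Q.mulVec z = z - ((1 - α) / (1 + α)) • W.mulVec z := by
      rw [hQ, Matrix.sub_mulVec, Matrix.one_mulVec, Matrix.smul_mulVec]
    rw [this]
    simp only [Pi.sub_apply, Pi.smul_apply, smul_eq_mul, mul_sub]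
    rw [Finset.sum_sub_distrib]
    have : ∑ u, Real.sqrt (d u) * ((1 - α) / (1 + α) * W.mulVec z u)
        = (1 - α) / (1 + α) * ∑ u, Real.sqrt (d u) * W.mulVec z u := by
      rw [Finset.mul_sum]; exact Finset.sum_congr rfl fun u _ => by ring
    rw [this, hWsum]
    field_simp
    ring
  -- W.mulVec of nonneg vector is nonneg
  have hWnn : ∀ z : V → ℝ, (∀ v, 0 ≤ z v) → ∀ u, 0 ≤ W.mulVec z u := by
    intro z hz u
    refine Finset.sum_nonneg fun w _ => ?_
    simp only [hW]
    exact mul_nonneg (div_nonneg (hAnn u w) (mul_nonneg (hsd u).le (hsd w).le)) (hz w)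
  -- nonnegativity of residuals
  have hrSnn : ∀ t < T, ∀ v, 0 ≤ (fun v => if v ∈ S t then r t v else 0) v := by
    intro t ht v
    dsimp only
    split_ifs with h
    · have := hactive t ht v h
      have hpos : 0 < (2 * α * ε / (1 + α)) * d v :=
        mul_pos (div_pos (by positivity) h1α) (hdpos v)
      nlinarith [hsd v, (hsd v).le, this]
    · exact le_refl 0
  have hrnn : ∀ t ≤ T, ∀ u, 0 ≤ r t u := by
    intro t
    induction t with
    | zero =>
      intro _ u
      rw [hr0, hb]
      have : (0:ℝ) ≤ (Pi.single s 1 : V → ℝ) u := by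
        rcases eq_or_ne u s with h | h <;> simp [Pi.single_apply, h]
      positivity
    | succ t ih =>
      intro ht u
      have htT : t < T := Nat.lt_of_succ_le ht
      have ihu := ih (le_of_lt htT)
      rw [hrupd t]
      set z : V → ℝ := fun v => if v ∈ S t then r t v else 0 with hz
      have hQz : Q.mulVec z u = z u - (1 - α) / (1 + α) * W.mulVec z u := by
        rw [hQ, Matrix.sub_mulVec, Matrix.one_mulVec, Matrix.smul_mulVec]
        simp
      have hWz : 0 ≤ W.mulVec z u := hWnn z (hrSnn t htT) u
      have hc : (0:ℝ) ≤ (1 - α) / (1 + α) := div_nonneg (by linarith) h1α.le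
      simp only [Pi.sub_apply, hQz]
      have hzu : z u ≤ r t u := by
        rw [hz]; dsimp only; split_ifs
        · exact le_refl _
        · exact ihu u
      nlinarith [mul_nonneg hc hWz]
  -- potential
  set y : ℕ → ℝ := fun t => ∑ u, Real.sqrt (d u) * r t u with hy
  have hstep : ∀ t, y (t + 1)
      = y t - (2 * α / (1 + α)) * ∑ u ∈ S t, Real.sqrt (d u) * r t u := by
    intro t
    have hzsum : ∑ u, Real.sqrt (d u) * (if u ∈ S t then r t u else 0)
        = ∑ u ∈ S t, Real.sqrt (d u) * r t u := by
      rw [Finset.sum_congr rfl fun u _ => (mul_ite _ _ _ _).trans (by rw [mul_zero])]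
      rw [Finset.sum_ite_mem, Finset.univ_inter]
    simp only [hy, hrupd t, Pi.sub_apply, mul_sub]
    rw [Finset.sum_sub_distrib, hQsum, hzsum]
  have htel : ∀ n, y n = y 0
      - (2 * α / (1 + α)) * ∑ t ∈ Finset.range n, ∑ u ∈ S t, Real.sqrt (d u) * r t u := by
    intro n
    induction n with
    | zero => simp
    | succ n ih =>
      rw [hstep n, ih, Finset.sum_range_succ]
      ring
  have hy0 : y 0 = 2 * α / (1 + α) := by
    simp only [hy, hr0, hb]
    rw [Finset.sum_eq_single s]
    · simp only [Pi.single_eq_same]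
      rw [mul_comm, mul_assoc, one_div, inv_mul_cancel₀ (ne_of_gt (hsd s)), mul_one]
    · intro u _ hu
      simp [Pi.single_eq_of_ne hu]
    · simp
  have hyT : 0 ≤ y T :=
    Finset.sum_nonneg fun u _ => mul_nonneg (hsd u).le (hrnn T le_rfl u)
  have hinner : ∀ t ∈ Finset.range T,
      (2 * α * ε / (1 + α)) * ∑ u ∈ S t, d u ≤ ∑ u ∈ S t, Real.sqrt (d u) * r t u := by
    intro t ht
    rw [Finset.mul_sum]
    exact Finset.sum_le_sum fun u hu => hactive t (Finset.mem_range.mp ht) u hu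
  have hbig : (2 * α * ε / (1 + α)) * ∑ t ∈ Finset.range T, ∑ u ∈ S t, d u
      ≤ ∑ t ∈ Finset.range T, ∑ u ∈ S t, Real.sqrt (d u) * r t u := by
    rw [Finset.mul_sum]
    exact Finset.sum_le_sum hinner
  have hc2 : (0:ℝ) < 2 * α / (1 + α) := div_pos (by linarith) h1α
  have hkey : (2 * α / (1 + α)) * ((2 * α * ε / (1 + α)) * ∑ t ∈ Finset.range T, ∑ u ∈ S t, d u)
      ≤ 2 * α / (1 + α) := by
    have := htel T
    rw [hy0] at this
    nlinarith [mul_le_mul_of_nonneg_left hbig hc2.le]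
  have hfin : (2 * α * ε / (1 + α)) * ∑ t ∈ Finset.range T, ∑ u ∈ S t, d u ≤ 1 := by
    have h2 : (2 * α / (1 + α)) * ((2 * α * ε / (1 + α)) * ∑ t ∈ Finset.range T, ∑ u ∈ S t, d u)
        ≤ (2 * α / (1 + α)) * 1 := by simpa using hkey
    exact le_of_mul_le_mul_left h2 hc2
  rw [le_div_iff₀ (by positivity)]
  calc (∑ t ∈ Finset.range T, ∑ u ∈ S t, d u) * (2 * α * ε)
      = (1 + α) * ((2 * α * ε / (1 + α)) * ∑ t ∈ Finset.range T, ∑ u ∈ S t, d u) := by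
        field_simp
    _ ≤ (1 + α) * 1 := by nlinarith [hfin]
    _ = 1 + α := mul_one _
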